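/- For each integer n ≥ 1 define g_n(K) = n^{−3}·log Z_n(K) for real K (this is well defined since Z_n(K) > 0 for real K). Then there exists a function g : ℝ → ℝ such that g_n converges to g as n → ∞, uniformly on every bounded interval [−M, M] (M > 0). In other words, the free energy per site of the zero-field Ising model on the periodic n×n×n cubic lattice converges uniformly to a limit as the system size becomes infinite, for βJ real and bounded. -/

import Mathlib

open scoped BigOperators

/-- The sites of the periodic `n × n × n` cubic lattice: the discrete 3-torus. -/
abbrev Site (n : ℕ) : Type := ZMod n × ZMod n × ZMod n

/-- A spin configuration: a function assigning to each site a spin in `{-1, 1} ⊆ ℤ`. -/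
abbrev SpinCfg (n : ℕ) : Type := Site n → ({-1, 1} : Finset ℤ)

/-- The bond sum `S(σ) = ∑_i ∑_{α=1}^3 σ(i)·σ(i+e_α)`, each of the `3n³`
nearest-neighbor bonds of the torus counted once. -/
def bondSum : (n : ℕ) → SpinCfg n → ℤ
  | 0, _ => 0
  | n + 1, σ =>
      ∑ i : Site (n + 1),
        ((σ i : ℤ) * (σ (i + (1, 0, 0)) : ℤ) + (σ i : ℤ) * (σ (i + (0, 1, 0)) : ℤ) +
          (σ i : ℤ) * (σ (i + (0, 0, 1)) : ℤ))

/-- The zero-field partition function `Z_n(K) = ∑_σ exp (K * S σ)`, for complex `K`. -/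
noncomputable def Zc : (n : ℕ) → ℂ → ℂ
  | 0, _ => 0
  | n + 1, K => ∑ σ : SpinCfg (n + 1), Complex.exp (K * (bondSum (n + 1) σ : ℂ))

/-- The zero-field partition function for real `K`. -/
noncomputable def Zr : (n : ℕ) → ℝ → ℝ
  | 0, _ => 0
  | n + 1, K => ∑ σ : SpinCfg (n + 1), Real.exp (K * (bondSum (n + 1) σ : ℝ))

/-- The free energy per site `g_n(K) = n⁻³ log Z_n(K)` for real `K`. -/
noncomputable def g : (n : ℕ) → ℝ → ℝ
  | 0, _ => 0
  | n + 1, K => Real.log (Zr (n + 1) K) / ((n : ℝ) + 1) ^ 3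

/-- Thermal expectation `⟨A⟩_n = Z_n(K)⁻¹ ∑_σ A σ * exp (K * S σ)`, real version. -/
noncomputable def expec : (n : ℕ) → ℝ → ((SpinCfg n) → ℝ) → ℝ
  | 0, _, _ => 0
  | n + 1, K, A =>
      (∑ σ : SpinCfg (n + 1), A σ * Real.exp (K * (bondSum (n + 1) σ : ℝ))) / Zr (n + 1) K

/-- Numerator `∑_σ (∏_{i ∈ T} σ i) exp (K * S σ)` of the correlation of the set `T` of sites. -/
noncomputable def corrNum : (n : ℕ) → Finset (Site n) → ℂ → ℂ
  | 0, _, _ => 0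
  | n + 1, T, K =>
      ∑ σ : SpinCfg (n + 1), (∏ i ∈ T, ((σ i : ℤ) : ℂ)) * Complex.exp (K * (bondSum (n + 1) σ : ℂ))

/-- The correlation function `C_{n,T}(K)` of a finite set `T` of sites. -/
noncomputable def corr (n : ℕ) (T : Finset (Site n)) (K : ℂ) : ℂ := corrNum n T K / Zc n K



def zE (n m : ℕ) [NeZero n] [NeZero m] : ZMod m × ZMod n ≃ ZMod (n * m) where
  toFun p := ((p.1.val * n + p.2.val : ℕ) : ZMod (n * m))
  invFun i := (((i.val / n : ℕ) : ZMod m), ((i.val : ℕ) : ZMod n))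
  left_inv := by
    rintro ⟨q, r⟩
    have hn : 0 < n := Nat.pos_of_ne_zero (NeZero.ne n)
    have hb : q.val * n + r.val < n * m := by
      calc q.val * n + r.val < q.val * n + n := by
            have := ZMod.val_lt r; omega
        _ = (q.val + 1) * n := by ring
        _ ≤ m * n := Nat.mul_le_mul_right n (ZMod.val_lt q)
        _ = n * m := Nat.mul_comm m n
    have hval : ((q.val * n + r.val : ℕ) : ZMod (n * m)).val = q.val * n + r.val := by
      rw [ZMod.val_natCast, Nat.mod_eq_of_lt hb]
    simp only [hval, Prod.mk.injEq]
    constructor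
    · have : (q.val * n + r.val) / n = q.val := by
        rw [Nat.mul_comm, Nat.mul_add_div hn, Nat.div_eq_of_lt (ZMod.val_lt r), Nat.add_zero]
      rw [this, ZMod.natCast_zmod_val]
    · push_cast
      simp [ZMod.natCast_self, ZMod.natCast_zmod_val]
  right_inv := by
    intro i
    have hn : 0 < n := Nat.pos_of_ne_zero (NeZero.ne n)
    have hi : i.val < n * m := ZMod.val_lt i
    have h1 : i.val / n < m := Nat.div_lt_of_lt_mul hi
    simp only [ZMod.val_natCast, Nat.mod_eq_of_lt h1]
    rw [Nat.div_add_mod', ZMod.natCast_zmod_val]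

lemma zE_shift (n m : ℕ) [NeZero n] [NeZero m] (q : ZMod m) (r : ZMod n)
    (h : r.val + 1 < n) : zE n m (q, r + 1) = zE n m (q, r) + 1 := by
  have h1 : r + 1 = ((r.val + 1 : ℕ) : ZMod n) := by
    push_cast [ZMod.natCast_zmod_val]; ring
  have h2 : (r + 1).val = r.val + 1 := by
    rw [h1, ZMod.val_natCast, Nat.mod_eq_of_lt h]
  show ((q.val * n + (r+1).val : ℕ) : ZMod (n*m)) = ((q.val * n + r.val : ℕ) : ZMod (n*m)) + 1
  rw [h2]
  push_cast
  ring

def sE (n m : ℕ) [NeZero n] [NeZero m] : Site m × Site n ≃ Site (n * m) where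
  toFun p := (zE n m (p.1.1, p.2.1), zE n m (p.1.2.1, p.2.2.1), zE n m (p.1.2.2, p.2.2.2))
  invFun i := ((((zE n m).symm i.1).1, ((zE n m).symm i.2.1).1, ((zE n m).symm i.2.2).1),
               (((zE n m).symm i.1).2, ((zE n m).symm i.2.1).2, ((zE n m).symm i.2.2).2))
  left_inv := by rintro ⟨⟨a,b,c⟩,⟨x,y,z⟩⟩; simp
  right_inv := by rintro ⟨a,b,c⟩; simp

lemma sE_shift1 (n m : ℕ) [NeZero n] [NeZero m] (b : Site m) (x : Site n)
    (h : x.1.val + 1 < n) : sE n m (b, x + (1,0,0)) = sE n m (b, x) + (1,0,0) := by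
  simp [sE, Prod.ext_iff, zE_shift n m b.1 x.1 h]

lemma sE_shift2 (n m : ℕ) [NeZero n] [NeZero m] (b : Site m) (x : Site n)
    (h : x.2.1.val + 1 < n) : sE n m (b, x + (0,1,0)) = sE n m (b, x) + (0,1,0) := by
  simp [sE, Prod.ext_iff, zE_shift n m b.2.1 x.2.1 h]

lemma sE_shift3 (n m : ℕ) [NeZero n] [NeZero m] (b : Site m) (x : Site n)
    (h : x.2.2.val + 1 < n) : sE n m (b, x + (0,0,1)) = sE n m (b, x) + (0,0,1) := by
  simp [sE, Prod.ext_iff, zE_shift n m b.2.2 x.2.2 h]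

lemma spin_cases {k : ℕ} (σ : SpinCfg k) (i : Site k) : (σ i : ℤ) = 1 ∨ (σ i : ℤ) = -1 := by
  have := (σ i).2
  simp only [Finset.mem_insert, Finset.mem_singleton] at this
  tauto

lemma spin_abs {k : ℕ} (σ : SpinCfg k) (i j : Site k) : |(σ i : ℤ) * (σ j : ℤ)| ≤ 1 := by
  rcases spin_cases σ i with h1 | h1 <;> rcases spin_cases σ j with h2 | h2 <;>
    simp [h1, h2]

lemma bondSum_eq (k : ℕ) [NeZero k] (σ : SpinCfg k) :
    bondSum k σ = ∑ i : Site k,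
        ((σ i : ℤ) * (σ (i + (1, 0, 0)) : ℤ) + (σ i : ℤ) * (σ (i + (0, 1, 0)) : ℤ) +
          (σ i : ℤ) * (σ (i + (0, 0, 1)) : ℤ)) := by
  obtain ⟨j, rfl⟩ := Nat.exists_eq_succ_of_ne_zero (NeZero.ne k)
  rfl

lemma count1 (n : ℕ) [NeZero n] :
    ∑ a : ZMod n, (if a.val + 1 < n then (0:ℤ) else 2) = 2 := by
  have hn : 0 < n := Nat.pos_of_ne_zero (NeZero.ne n)
  have hv : ((n-1:ℕ) : ZMod n).val = n-1 := by
    rw [ZMod.val_natCast, Nat.mod_eq_of_lt (by omega)]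
  have key : ∀ a : ZMod n, (if a.val + 1 < n then (0:ℤ) else 2)
      = if a = ((n-1 : ℕ) : ZMod n) then 2 else 0 := by
    intro a
    by_cases h : a = ((n-1:ℕ) : ZMod n)
    · subst h
      rw [if_pos rfl, if_neg (by omega)]
    · have hne : a.val ≠ n - 1 := fun hc => h (by rw [← ZMod.natCast_zmod_val a, hc])
      have := ZMod.val_lt a
      rw [if_pos (by omega), if_neg h]
  rw [Finset.sum_congr rfl (fun a _ => key a)]
  simp

lemma sum_fst (n : ℕ) [NeZero n] (f : ZMod n → ℤ) :
    ∑ x : Site n, f x.1 = (n:ℤ)^2 * ∑ a : ZMod n, f a := by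
  simp only [Fintype.sum_prod_type, Finset.sum_const, Finset.card_univ, ZMod.card, Fintype.card_prod, Nat.cast_mul,
    nsmul_eq_mul, ← Finset.sum_mul, ← Finset.mul_sum]
  ring

lemma sum_snd1 (n : ℕ) [NeZero n] (f : ZMod n → ℤ) :
    ∑ x : Site n, f x.2.1 = (n:ℤ)^2 * ∑ a : ZMod n, f a := by
  simp only [Fintype.sum_prod_type, Finset.sum_const, Finset.card_univ, ZMod.card, Fintype.card_prod, Nat.cast_mul,
    nsmul_eq_mul, ← Finset.sum_mul, ← Finset.mul_sum]
  ring

lemma sum_snd2 (n : ℕ) [NeZero n] (f : ZMod n → ℤ) :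
    ∑ x : Site n, f x.2.2 = (n:ℤ)^2 * ∑ a : ZMod n, f a := by
  simp only [Fintype.sum_prod_type, Finset.sum_const, Finset.card_univ, ZMod.card, Fintype.card_prod, Nat.cast_mul,
    nsmul_eq_mul, ← Finset.sum_mul, ← Finset.mul_sum]
  ring

lemma countSite (n : ℕ) [NeZero n] :
    ∑ x : Site n, ((if x.1.val + 1 < n then (0:ℤ) else 2)
      + (if x.2.1.val + 1 < n then (0:ℤ) else 2)
      + (if x.2.2.val + 1 < n then (0:ℤ) else 2)) = 6 * (n:ℤ)^2 := by
  rw [Finset.sum_add_distrib, Finset.sum_add_distrib,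
    sum_fst n (fun a => if a.val + 1 < n then (0:ℤ) else 2),
    sum_snd1 n (fun a => if a.val + 1 < n then (0:ℤ) else 2),
    sum_snd2 n (fun a => if a.val + 1 < n then (0:ℤ) else 2), count1 n]
  ring

lemma bondSum_block (n m : ℕ) [NeZero n] [NeZero m] (σ : SpinCfg (n * m)) :
    |bondSum (n * m) σ - ∑ b : Site m, bondSum n (fun x => σ (sE n m (b, x)))|
      ≤ 6 * (n:ℤ)^2 * (m:ℤ)^3 := by
  have hcard : (Fintype.card (Site m) : ℤ) = (m:ℤ)^3 := by
    simp [Fintype.card_prod, ZMod.card]; ring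
  rw [bondSum_eq]
  rw [← Equiv.sum_comp (sE n m) (fun i => (σ i : ℤ) * (σ (i + (1, 0, 0)) : ℤ)
      + (σ i : ℤ) * (σ (i + (0, 1, 0)) : ℤ) + (σ i : ℤ) * (σ (i + (0, 0, 1)) : ℤ))]
  rw [Fintype.sum_prod_type]
  conv_lhs => rw [Finset.sum_congr rfl (fun b _ => bondSum_eq n (fun x => σ (sE n m (b, x))))]
  rw [← Finset.sum_sub_distrib]
  refine le_trans (Finset.abs_sum_le_sum_abs _ _) ?_
  have key : ∀ b : Site m,
      |∑ x : Site n, ((σ (sE n m (b,x)) : ℤ) * (σ (sE n m (b,x) + (1, 0, 0)) : ℤ)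
          + (σ (sE n m (b,x)) : ℤ) * (σ (sE n m (b,x) + (0, 1, 0)) : ℤ)
          + (σ (sE n m (b,x)) : ℤ) * (σ (sE n m (b,x) + (0, 0, 1)) : ℤ))
        - ∑ x : Site n, ((σ (sE n m (b,x)) : ℤ) * (σ (sE n m (b,x + (1, 0, 0))) : ℤ)
          + (σ (sE n m (b,x)) : ℤ) * (σ (sE n m (b,x + (0, 1, 0))) : ℤ)
          + (σ (sE n m (b,x)) : ℤ) * (σ (sE n m (b,x + (0, 0, 1))) : ℤ))|
        ≤ 6 * (n:ℤ)^2 := by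
    intro b
    rw [← Finset.sum_sub_distrib]
    refine le_trans (Finset.abs_sum_le_sum_abs _ _) ?_
    rw [← countSite n]
    refine Finset.sum_le_sum ?_
    intro x _
    set s0 : ℤ := (σ (sE n m (b,x)) : ℤ) with hs0
    set a1 : ℤ := (σ (sE n m (b,x) + (1,0,0)) : ℤ) with ha1
    set a2 : ℤ := (σ (sE n m (b,x) + (0,1,0)) : ℤ) with ha2
    set a3 : ℤ := (σ (sE n m (b,x) + (0,0,1)) : ℤ) with ha3
    set c1 : ℤ := (σ (sE n m (b,x + (1,0,0))) : ℤ) with hc1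
    set c2 : ℤ := (σ (sE n m (b,x + (0,1,0))) : ℤ) with hc2
    set c3 : ℤ := (σ (sE n m (b,x + (0,0,1))) : ℤ) with hc3
    have h1 : |s0 * a1 - s0 * c1| ≤ if x.1.val + 1 < n then (0:ℤ) else 2 := by
      split_ifs with h
      · rw [ha1, hc1, ← sE_shift1 n m b x h, sub_self, abs_zero]
      · refine le_trans (abs_sub _ _) ?_
        have t1 := spin_abs σ (sE n m (b,x)) (sE n m (b,x) + (1,0,0))
        have t2 := spin_abs σ (sE n m (b,x)) (sE n m (b,x + (1,0,0)))
        rw [← hs0, ← ha1] at t1; rw [← hs0, ← hc1] at t2; omega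
    have h2 : |s0 * a2 - s0 * c2| ≤ if x.2.1.val + 1 < n then (0:ℤ) else 2 := by
      split_ifs with h
      · rw [ha2, hc2, ← sE_shift2 n m b x h, sub_self, abs_zero]
      · refine le_trans (abs_sub _ _) ?_
        have t1 := spin_abs σ (sE n m (b,x)) (sE n m (b,x) + (0,1,0))
        have t2 := spin_abs σ (sE n m (b,x)) (sE n m (b,x + (0,1,0)))
        rw [← hs0, ← ha2] at t1; rw [← hs0, ← hc2] at t2; omega
    have h3 : |s0 * a3 - s0 * c3| ≤ if x.2.2.val + 1 < n then (0:ℤ) else 2 := by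
      split_ifs with h
      · rw [ha3, hc3, ← sE_shift3 n m b x h, sub_self, abs_zero]
      · refine le_trans (abs_sub _ _) ?_
        have t1 := spin_abs σ (sE n m (b,x)) (sE n m (b,x) + (0,0,1))
        have t2 := spin_abs σ (sE n m (b,x)) (sE n m (b,x + (0,0,1)))
        rw [← hs0, ← ha3] at t1; rw [← hs0, ← hc3] at t2; omega
    have e : s0 * a1 + s0 * a2 + s0 * a3 - (s0 * c1 + s0 * c2 + s0 * c3)
        = (s0 * a1 - s0 * c1) + (s0 * a2 - s0 * c2) + (s0 * a3 - s0 * c3) := by ring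
    rw [e]
    exact le_trans (abs_add_three _ _ _) (add_le_add (add_le_add h1 h2) h3)
  refine le_trans (Finset.sum_le_sum (fun b _ => key b)) ?_
  rw [Finset.sum_const, Finset.card_univ, nsmul_eq_mul, hcard]
  exact le_of_eq (by ring)

instance spinNonempty : Nonempty ({-1, 1} : Finset ℤ) := ⟨⟨1, by simp⟩⟩

lemma Zr_eq (k : ℕ) [NeZero k] (K : ℝ) :
    Zr k K = ∑ σ : SpinCfg k, Real.exp (K * (bondSum k σ : ℝ)) := by
  obtain ⟨j, rfl⟩ := Nat.exists_eq_succ_of_ne_zero (NeZero.ne k)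
  rfl

lemma Zr_pos (k : ℕ) [NeZero k] (K : ℝ) : 0 < Zr k K := by
  rw [Zr_eq]
  exact Finset.sum_pos (fun σ _ => Real.exp_pos _) Finset.univ_nonempty

lemma g_eq (k : ℕ) [NeZero k] (K : ℝ) : g k K = Real.log (Zr k K) / (k : ℝ)^3 := by
  obtain ⟨j, rfl⟩ := Nat.exists_eq_succ_of_ne_zero (NeZero.ne k)
  show Real.log (Zr (j+1) K) / ((j : ℝ) + 1) ^ 3 = _
  push_cast
  rfl

lemma sum_exp_T (n m : ℕ) [NeZero n] [NeZero m] (K : ℝ) :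
    ∑ σ : SpinCfg (n * m),
        Real.exp (K * ((∑ b : Site m, bondSum n (fun x => σ (sE n m (b, x)))) : ℤ))
      = (Zr n K) ^ (m^3) := by
  have hcard : Fintype.card (Site m) = m^3 := by
    simp [Fintype.card_prod, ZMod.card]; ring
  set C : (Site m → SpinCfg n) ≃ SpinCfg (n * m) :=
    (Equiv.curry (Site m) (Site n) ({-1,1} : Finset ℤ)).symm.trans
      (Equiv.arrowCongr (sE n m) (Equiv.refl _)) with hC
  rw [← Equiv.sum_comp C]
  have hCval : ∀ (τ : Site m → SpinCfg n) (b : Site m),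
      (fun x => C τ (sE n m (b, x))) = τ b := by
    intro τ b
    funext x
    simp [hC, Equiv.curry, Equiv.arrowCongr]
  have step : ∀ τ : Site m → SpinCfg n,
      Real.exp (K * ((∑ b : Site m, bondSum n (fun x => C τ (sE n m (b, x)))) : ℤ))
        = ∏ b : Site m, Real.exp (K * (bondSum n (τ b) : ℝ)) := by
    intro τ
    rw [← Real.exp_sum]
    congr 1
    push_cast
    rw [Finset.mul_sum]
    exact Finset.sum_congr rfl (fun b _ => by rw [hCval τ b])
  rw [Finset.sum_congr rfl (fun τ _ => step τ)]
  rw [← Fintype.prod_sum (fun (_ : Site m) (s : SpinCfg n) => Real.exp (K * (bondSum n s : ℝ)))]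
  rw [Finset.prod_const, Finset.card_univ, hcard, ← Zr_eq n K]

lemma log_Z_block (n m : ℕ) [NeZero n] [NeZero m] (K : ℝ) :
    |Real.log (Zr (n * m) K) - (m:ℝ)^3 * Real.log (Zr n K)|
      ≤ |K| * (6 * (n:ℝ)^2 * (m:ℝ)^3) := by
  set D : ℝ := 6 * (n:ℝ)^2 * (m:ℝ)^3 with hD
  have hDnn : 0 ≤ D := by positivity
  have hZn := Zr_pos n K
  have hZnm := Zr_pos (n*m) K
  have hpow : (0:ℝ) < (Zr n K)^(m^3) := pow_pos hZn _
  have expand : ∀ σ : SpinCfg (n*m),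
      |K * (bondSum (n*m) σ : ℝ)
        - K * ((∑ b : Site m, bondSum n (fun x => σ (sE n m (b, x)))) : ℤ)| ≤ |K| * D := by
    intro σ
    rw [← mul_sub, abs_mul]
    refine mul_le_mul_of_nonneg_left ?_ (abs_nonneg K)
    have hb := bondSum_block n m σ
    have : |(bondSum (n*m) σ : ℝ) - ((∑ b : Site m, bondSum n (fun x => σ (sE n m (b, x)))) : ℤ)|
        ≤ D := by
      rw [hD]
      exact_mod_cast hb
    exact this
  have upper : Zr (n*m) K ≤ Real.exp (|K| * D) * (Zr n K)^(m^3) := by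
    rw [Zr_eq, ← sum_exp_T n m K, Finset.mul_sum]
    refine Finset.sum_le_sum (fun σ _ => ?_)
    rw [← Real.exp_add, Real.exp_le_exp]
    have := expand σ
    have h1 := (abs_le.mp this).2
    linarith
  have lower : Real.exp (-(|K| * D)) * (Zr n K)^(m^3) ≤ Zr (n*m) K := by
    rw [Zr_eq (n*m) K, ← sum_exp_T n m K, Finset.mul_sum]
    refine Finset.sum_le_sum (fun σ _ => ?_)
    rw [← Real.exp_add, Real.exp_le_exp]
    have := expand σ
    have h1 := (abs_le.mp this).1
    linarith
  have hlogpow : Real.log ((Zr n K)^(m^3)) = (m:ℝ)^3 * Real.log (Zr n K) := by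
    rw [Real.log_pow]
    push_cast
    ring
  have lup : Real.log (Zr (n*m) K) ≤ |K| * D + (m:ℝ)^3 * Real.log (Zr n K) := by
    have h := Real.log_le_log hZnm upper
    rw [Real.log_mul (Real.exp_ne_zero _) (ne_of_gt hpow), Real.log_exp, hlogpow] at h
    linarith
  have llo : -(|K| * D) + (m:ℝ)^3 * Real.log (Zr n K) ≤ Real.log (Zr (n*m) K) := by
    have h := Real.log_le_log (by positivity) lower
    rw [Real.log_mul (Real.exp_ne_zero _) (ne_of_gt hpow), Real.log_exp, hlogpow] at h
    linarith
  rw [abs_le]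
  constructor <;> linarith

lemma g_block (n m : ℕ) [NeZero n] [NeZero m] (K : ℝ) :
    |g (n * m) K - g n K| ≤ 6 * |K| / n := by
  have hn : (0:ℝ) < n := by exact_mod_cast Nat.pos_of_ne_zero (NeZero.ne n)
  have hm : (0:ℝ) < m := by exact_mod_cast Nat.pos_of_ne_zero (NeZero.ne m)
  rw [g_eq, g_eq]
  have hcast : ((n * m : ℕ) : ℝ)^3 = (n:ℝ)^3 * (m:ℝ)^3 := by push_cast; ring
  have hsplit : Real.log (Zr (n*m) K) / ((n*m : ℕ) : ℝ)^3 - Real.log (Zr n K) / (n:ℝ)^3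
      = (Real.log (Zr (n*m) K) - (m:ℝ)^3 * Real.log (Zr n K)) / ((n:ℝ)^3 * (m:ℝ)^3) := by
    rw [hcast]
    field_simp
  rw [hsplit, abs_div,
    abs_of_pos (show (0:ℝ) < (n:ℝ)^3 * (m:ℝ)^3 by positivity)]
  calc |Real.log (Zr (n*m) K) - (m:ℝ)^3 * Real.log (Zr n K)| / ((n:ℝ)^3 * (m:ℝ)^3)
      ≤ (|K| * (6 * (n:ℝ)^2 * (m:ℝ)^3)) / ((n:ℝ)^3 * (m:ℝ)^3) := by
        gcongr
        exact log_Z_block n m K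
    _ = 6 * |K| / n := by field_simp

lemma g_cauchy (a b : ℕ) [NeZero a] [NeZero b] (K : ℝ) :
    |g a K - g b K| ≤ 6 * |K| / a + 6 * |K| / b := by
  have h1 := g_block a b K
  have h2 := g_block b a K
  rw [Nat.mul_comm b a] at h2
  have key : g a K - g b K = (g (a*b) K - g b K) - (g (a*b) K - g a K) := by ring
  rw [key]
  refine le_trans (abs_sub _ _) ?_
  linarith

/-- The free energy per site `g_n(K) = n⁻³ log Z_n(K)` of the zero-field
Ising model on the periodic `n × n × n` cubic lattice converges, as `n → ∞`, to a limit
function `g`, uniformly on every bounded interval `[-M, M]` of real `K = βJ`. -/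
theorem freeEnergy_tendstoUniformly :
    ∃ gLim : ℝ → ℝ, ∀ M : ℝ, 0 < M →
      TendstoUniformlyOn (fun n K => g n K) gLim Filter.atTop (Set.Icc (-M) M) := by
  have hb : ∀ (p q : ℕ), 1 ≤ p → 1 ≤ q → ∀ K : ℝ,
      |g p K - g q K| ≤ 6 * |K| / p + 6 * |K| / q := by
    intro p q hp hq K
    haveI : NeZero p := ⟨by omega⟩
    haveI : NeZero q := ⟨by omega⟩
    exact g_cauchy p q K
  have hex : ∀ K : ℝ, ∃ L, Filter.Tendsto (fun k => g k K) Filter.atTop (nhds L) := by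
    intro K
    apply cauchySeq_tendsto_of_complete
    rw [Metric.cauchySeq_iff]
    intro ε hε
    obtain ⟨N₁, hN₁⟩ := exists_nat_gt (12 * (|K| + 1) / ε)
    refine ⟨N₁ + 1, fun p hp q hq => ?_⟩
    have hNpos : (0:ℝ) < (N₁ + 1 : ℕ) := by positivity
    have hp1 : (1:ℕ) ≤ p := le_trans (Nat.le_add_left 1 N₁) hp
    have hq1 : (1:ℕ) ≤ q := le_trans (Nat.le_add_left 1 N₁) hq
    have hpp : (0:ℝ) < p := by exact_mod_cast hp1
    have hqq : (0:ℝ) < q := by exact_mod_cast hq1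
    rw [Real.dist_eq]
    have h1 := hb p q hp1 hq1 K
    have hple : ((N₁ + 1 : ℕ) : ℝ) ≤ p := by exact_mod_cast hp
    have hqle : ((N₁ + 1 : ℕ) : ℝ) ≤ q := by exact_mod_cast hq
    have h2 : 6 * |K| / p ≤ 6 * (|K| + 1) / ((N₁ + 1 : ℕ) : ℝ) := by
      calc 6 * |K| / p ≤ 6 * (|K| + 1) / p := by gcongr; linarith
        _ ≤ 6 * (|K| + 1) / ((N₁ + 1 : ℕ) : ℝ) := by gcongr
    have h3 : 6 * |K| / q ≤ 6 * (|K| + 1) / ((N₁ + 1 : ℕ) : ℝ) := by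
      calc 6 * |K| / q ≤ 6 * (|K| + 1) / q := by gcongr; linarith
        _ ≤ 6 * (|K| + 1) / ((N₁ + 1 : ℕ) : ℝ) := by gcongr
    have hfin : 12 * (|K| + 1) / ((N₁ + 1 : ℕ) : ℝ) < ε := by
      rw [div_lt_iff₀ hNpos]
      rw [div_lt_iff₀ hε] at hN₁
      push_cast
      nlinarith [abs_nonneg K]
    calc |g p K - g q K| ≤ 6 * |K| / p + 6 * |K| / q := h1
      _ ≤ 6 * (|K| + 1) / ((N₁ + 1 : ℕ) : ℝ) + 6 * (|K| + 1) / ((N₁ + 1 : ℕ) : ℝ) :=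
          add_le_add h2 h3
      _ = 12 * (|K| + 1) / ((N₁ + 1 : ℕ) : ℝ) := by ring
      _ < ε := hfin
  choose gLim hg using hex
  have key2 : ∀ K : ℝ, ∀ p : ℕ, 1 ≤ p → |g p K - gLim K| ≤ 6 * |K| / p := by
    intro K p hp
    have t1 : Filter.Tendsto (fun q : ℕ => |g p K - g q K|) Filter.atTop
        (nhds |g p K - gLim K|) := ((tendsto_const_nhds.sub (hg K)).abs)
    have t2 : Filter.Tendsto (fun q : ℕ => 6 * |K| / p + 6 * |K| / q) Filter.atTop
        (nhds (6 * |K| / p + 0)) :=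
      tendsto_const_nhds.add (tendsto_const_div_atTop_nhds_zero_nat (6 * |K|))
    have hle : ∀ᶠ q : ℕ in Filter.atTop, |g p K - g q K| ≤ 6 * |K| / p + 6 * |K| / q := by
      filter_upwards [Filter.eventually_ge_atTop 1] with q hq
      exact hb p q hp hq K
    have := le_of_tendsto_of_tendsto t1 t2 hle
    simpa using this
  refine ⟨gLim, fun M hM => ?_⟩
  rw [Metric.tendstoUniformlyOn_iff]
  intro ε hε
  obtain ⟨N₁, hN₁⟩ := exists_nat_gt (6 * M / ε)
  rw [Filter.eventually_atTop]
  refine ⟨N₁ + 1, fun p hp K hK => ?_⟩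
  have hp1 : (1:ℕ) ≤ p := le_trans (Nat.le_add_left 1 N₁) hp
  have hpp : (0:ℝ) < p := by exact_mod_cast hp1
  have hKM : |K| ≤ M := abs_le.mpr ⟨hK.1, hK.2⟩
  have h1 := key2 K p hp1
  have h2 : 6 * |K| / p ≤ 6 * M / p := by gcongr
  have hple : ((N₁ + 1 : ℕ) : ℝ) ≤ p := by exact_mod_cast hp
  have hN1pos : (0:ℝ) < ((N₁ + 1 : ℕ) : ℝ) := by positivity
  have h3 : 6 * M / p ≤ 6 * M / ((N₁ + 1 : ℕ) : ℝ) := by gcongr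
  have h4 : 6 * M / ((N₁ + 1 : ℕ) : ℝ) < ε := by
    rw [div_lt_iff₀ hN1pos]
    rw [div_lt_iff₀ hε] at hN₁
    push_cast
    nlinarith
  rw [Real.dist_eq, abs_sub_comm]
  calc |g p K - gLim K| ≤ 6 * |K| / p := h1
    _ ≤ 6 * M / p := h2
    _ ≤ 6 * M / ((N₁ + 1 : ℕ) : ℝ) := h3
    _ < ε := h4
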